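/- arXiv:2506.10788 — 4 statements merged into one kernel-verified Lean document; each statement's English description precedes it below -/
import Mathlib

section
/- For every real number a, every natural number N ≥ 1, and every real parameter b with b > 2·N·π + |a| + 1, the equation z = a + b·sin(z) − sin(z²) has at least 2N distinct real solutions z. -/
open Real

private lemma fp_sign (a b : ℝ) (N : ℕ) (hN : 1 ≤ N)
    (hb : b > 2 * N * Real.pi + |a| + 1) (j : ℤ) (hj1 : -(N:ℤ) ≤ j) (hj2 : j ≤ N) :
    (0 < a + b * Real.sin ((j:ℝ) * Real.pi + Real.pi/2)
        - Real.sin (((j:ℝ) * Real.pi + Real.pi/2)^2) - ((j:ℝ) * Real.pi + Real.pi/2) ∧ Even j)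
    ∨ (a + b * Real.sin ((j:ℝ) * Real.pi + Real.pi/2)
        - Real.sin (((j:ℝ) * Real.pi + Real.pi/2)^2) - ((j:ℝ) * Real.pi + Real.pi/2) < 0 ∧ Odd j) := by
  have hsin : Real.sin ((j:ℝ) * Real.pi + Real.pi/2) = (-1 : ℝ) ^ j := by
    rw [Real.sin_add_pi_div_two]
    have := Real.cos_int_mul_pi_sub 0 j
    simpa using this
  set x : ℝ := (j:ℝ) * Real.pi + Real.pi/2 with hx
  have hpi := Real.pi_gt_three
  have hNpos : (1:ℝ) ≤ (N:ℝ) := by exact_mod_cast hN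
  have hjabs : |x| ≤ 2 * N * Real.pi := by
    have h1 : |(j:ℝ)| ≤ (N:ℝ) := by
      rw [abs_le]; constructor <;> [exact_mod_cast hj1; exact_mod_cast hj2]
    have := abs_add_le ((j:ℝ) * Real.pi) (Real.pi/2)
    have h2 : |(j:ℝ) * Real.pi| ≤ N * Real.pi := by
      rw [abs_mul, abs_of_pos Real.pi_pos]
      nlinarith
    have h3 : |Real.pi/2| = Real.pi/2 := abs_of_pos (by linarith)
    nlinarith
  have habs := abs_le.mp hjabs
  have haa := abs_le.mp (le_refl |a|)
  have haa1 : -|a| ≤ a := neg_abs_le a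
  have haa2 : a ≤ |a| := le_abs_self a
  have hs1 := Real.neg_one_le_sin (x^2)
  have hs2 := Real.sin_le_one (x^2)
  rcases Int.even_or_odd j with he | ho
  · left
    refine ⟨?_, he⟩
    rw [hsin, he.neg_one_zpow]
    nlinarith [habs.2]
  · right
    refine ⟨?_, ho⟩
    rw [hsin, ho.neg_one_zpow]
    nlinarith [habs.1]

/-- For every real number `a`, every natural number `N ≥ 1`, and every real
parameter `b` with `b > 2·N·π + |a| + 1`, the equation `z = a + b·sin(z) − sin(z²)` has at
least `2N` distinct real solutions `z`. -/
theorem fixed_point_equation_has_at_least_two_N_solutions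
    (a : ℝ) (N : ℕ) (hN : 1 ≤ N) (b : ℝ)
    (hb : b > 2 * N * Real.pi + |a| + 1) :
    ∃ S : Finset ℝ, 2 * N ≤ S.card ∧
      ∀ z ∈ S, z = a + b * Real.sin z - Real.sin (z ^ 2) := by
  set g : ℝ → ℝ := fun z => a + b * Real.sin z - Real.sin (z ^ 2) - z with hg
  set x : ℤ → ℝ := fun j => (j:ℝ) * Real.pi + Real.pi/2 with hxdef
  have hxmono : StrictMono x := by
    intro i j hij
    have : (i:ℝ) < j := by exact_mod_cast hij
    have := Real.pi_pos
    simp only [hxdef]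
    nlinarith
  have hgc : Continuous g := by
    fun_prop
  have key : ∀ k : ℤ, ∃ z : ℝ, (-(N:ℤ) ≤ k ∧ k < N) →
      (z ∈ Set.Ioo (x k) (x (k+1)) ∧ g z = 0) := by
    intro k
    by_cases hk : -(N:ℤ) ≤ k ∧ k < N
    · obtain ⟨hk1, hk2⟩ := hk
      have h1 := fp_sign a b N hN hb k hk1 (le_of_lt hk2)
      have h2 := fp_sign a b N hN hb (k+1) (by omega) (by omega)
      have hle : x k ≤ x (k+1) := (hxmono (by omega)).le
      have hcont : ContinuousOn g (Set.Icc (x k) (x (k+1))) := hgc.continuousOn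
      rcases h1 with ⟨hpos, hev⟩ | ⟨hneg, hod⟩
      · -- g(x k) > 0, k even so k+1 odd, g(x (k+1)) < 0
        rcases h2 with ⟨_, hev'⟩ | ⟨hneg', _⟩
        · exact absurd hev (by simpa [Int.even_add_one] using hev')
        · have : (0:ℝ) ∈ Set.Ioo (g (x (k+1))) (g (x k)) := ⟨hneg', hpos⟩
          obtain ⟨z, hz, hgz⟩ := intermediate_value_Ioo' hle hcont this
          exact ⟨z, fun _ => ⟨hz, hgz⟩⟩
      · rcases h2 with ⟨hpos', _⟩ | ⟨_, hod'⟩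
        · have : (0:ℝ) ∈ Set.Ioo (g (x k)) (g (x (k+1))) := ⟨hneg, hpos'⟩
          obtain ⟨z, hz, hgz⟩ := intermediate_value_Ioo hle hcont this
          exact ⟨z, fun _ => ⟨hz, hgz⟩⟩
        · obtain ⟨m, rfl⟩ := hod
          obtain ⟨m', hm'⟩ := hod'
          omega
    · exact ⟨0, fun h => absurd h hk⟩
  choose r hr using key
  refine ⟨(Finset.Ico (-(N:ℤ)) (N:ℤ)).image r, ?_, ?_⟩
  · have hinj : Set.InjOn r (Finset.Ico (-(N:ℤ)) (N:ℤ)) := by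
      intro i hi j hj hij
      simp only [Finset.coe_Ico, Set.mem_Ico] at hi hj
      have key2 : ∀ i j : ℤ, (-(N:ℤ) ≤ i ∧ i < N) → (-(N:ℤ) ≤ j ∧ j < N) → i < j → r i < r j := by
        intro i j hi hj hlt
        have h1 := (hr i hi).1
        have h2 := (hr j hj).1
        calc r i < x (i+1) := h1.2
        _ ≤ x j := (hxmono.le_iff_le).mpr (by omega)
        _ < r j := h2.1
      rcases lt_trichotomy i j with h | h | h
      · exact absurd hij (ne_of_lt (key2 i j hi hj h))
      · exact h
      · exact absurd hij.symm (ne_of_lt (key2 j i hj hi h))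
    rw [Finset.card_image_of_injOn hinj]
    simp [Int.card_Ico]
    omega
  · intro z hz
    simp only [Finset.mem_image, Finset.mem_Ico] at hz
    obtain ⟨k, hk, rfl⟩ := hz
    have := (hr k ⟨hk.1, hk.2⟩).2
    simp only [hg] at this
    linarith
end

section
/- For every real number a and every natural number M, there exists a real number b₀ such that for all b > b₀ the equation z = a + b·sin(z) − sin(z²) has at least M distinct real solutions; consequently the number of real solutions of this equation grows without bound as b increases. -/
/-- For every real number `a` and every natural number `M`, there exists a real
number `b₀` such that for all `b > b₀` the equation `z = a + b·sin(z) − sin(z²)` has at least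
`M` distinct real solutions; consequently the number of real solutions grows without bound as
`b` increases. -/
theorem fixed_point_equation_solutions_grow_without_bound
    (a : ℝ) (M : ℕ) :
    ∃ b₀ : ℝ, ∀ b : ℝ, b > b₀ →
      ∃ S : Finset ℝ, M ≤ S.card ∧
        ∀ z ∈ S, z = a + b * Real.sin z - Real.sin (z ^ 2) := by
  refine ⟨|a| + 2 * Real.pi * M + 2 * Real.pi + 2, fun b hb => ?_⟩
  have hπ := Real.pi_pos
  have habs : -|a| ≤ a ∧ a ≤ |a| := ⟨neg_abs_le a, le_abs_self a⟩
  have key : ∀ k : Fin M, ∃ z,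
      z ∈ Set.Icc (-(Real.pi/2) + k * (2*Real.pi)) (Real.pi/2 + k * (2*Real.pi)) ∧
      z = a + b * Real.sin z - Real.sin (z ^ 2) := by
    intro k
    set p : ℝ := -(Real.pi/2) + k * (2*Real.pi) with hp
    set q : ℝ := Real.pi/2 + k * (2*Real.pi) with hq
    have hpq : p ≤ q := by rw [hp, hq]; linarith
    have hsinp : Real.sin p = -1 := by
      rw [hp, Real.sin_add_nat_mul_two_pi, Real.sin_neg, Real.sin_pi_div_two]
    have hsinq : Real.sin q = 1 := by
      rw [hq, Real.sin_add_nat_mul_two_pi, Real.sin_pi_div_two]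
    have hkM : (k : ℝ) + 1 ≤ M := by exact_mod_cast k.isLt
    have hknn : (0:ℝ) ≤ (k : ℝ) := Nat.cast_nonneg _
    set g : ℝ → ℝ := fun z => z - (a + b * Real.sin z - Real.sin (z ^ 2)) with hg
    have hcont : ContinuousOn g (Set.Icc p q) := by fun_prop
    have hgp : 0 < g p := by
      have h1 : -1 ≤ Real.sin (p ^ 2) := Real.neg_one_le_sin _
      have : g p = p - a + b + Real.sin (p ^ 2) := by
        rw [hg]; simp [hsinp]; ring
      rw [this, hp]
      nlinarith [habs.1, habs.2]
    have hgq : g q < 0 := by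
      have h1 : Real.sin (q ^ 2) ≤ 1 := Real.sin_le_one _
      have : g q = q - a - b + Real.sin (q ^ 2) := by
        rw [hg]; simp [hsinq]; ring
      rw [this, hq]
      nlinarith [habs.1, habs.2]
    have hIVT := intermediate_value_Icc' hpq hcont
    have h0 : (0:ℝ) ∈ Set.Icc (g q) (g p) := ⟨le_of_lt hgq, le_of_lt hgp⟩
    obtain ⟨z, hz, hz0⟩ := hIVT h0
    refine ⟨z, hz, ?_⟩
    have : z - (a + b * Real.sin z - Real.sin (z ^ 2)) = 0 := hz0
    linarith
  choose f hf1 hf2 using key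
  have hsep : ∀ j k : Fin M, (j:ℕ) < (k:ℕ) → f j ≠ f k := by
    intro j k hlt heq
    have h1 := (hf1 j).2
    have h2 := (hf1 k).1
    have hjk : (j : ℝ) + 1 ≤ (k : ℝ) := by exact_mod_cast hlt
    rw [heq] at h1
    nlinarith
  have hinj : Function.Injective f := by
    intro j k hjk
    by_contra hne
    rcases lt_trichotomy (j:ℕ) (k:ℕ) with h1 | h1 | h1
    · exact hsep j k h1 hjk
    · exact hne (Fin.ext h1)
    · exact hsep k j h1 hjk.symm
  refine ⟨Finset.univ.image f, ?_, ?_⟩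
  · rw [Finset.card_image_of_injective _ hinj, Finset.card_univ, Fintype.card_fin]
  · intro z hz
    obtain ⟨j, _, hj⟩ := Finset.mem_image.mp hz
    rw [← hj]
    exact hf2 j
end

section
/- For all real numbers a, c, every natural number N ≥ 1, and every real b with b + c > 2·N·π + |a| + 1, the map F(x, y, z) = (y, sin z, a + b·x + c·y − sin(z²)) has at least 2N distinct fixed points in ℝ³. -/
/-- The 3D sinusoidal map `F(x, y, z) = (y, sin z, a + b·x + c·y − sin(z²))`. -/
noncomputable def sinusoidalMap (a b c : ℝ) (p : ℝ × ℝ × ℝ) : ℝ × ℝ × ℝ :=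
  (p.2.1, Real.sin p.2.2, a + b * p.1 + c * p.2.1 - Real.sin (p.2.2 ^ 2))

/-- For all real numbers `a, c`, every natural number `N ≥ 1`, and every real `b`
with `b + c > 2·N·π + |a| + 1`, the map `F(x, y, z) = (y, sin z, a + b·x + c·y − sin(z²))` has
at least `2N` distinct fixed points in `ℝ³`. -/
theorem sinusoidalMap_has_at_least_two_N_fixed_points
    (a c : ℝ) (N : ℕ) (hN : 1 ≤ N) (b : ℝ)
    (hbc : b + c > 2 * N * Real.pi + |a| + 1) :
    ∃ S : Finset (ℝ × ℝ × ℝ), 2 * N ≤ S.card ∧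
      ∀ p ∈ S, sinusoidalMap a b c p = p := by
  have hpi := Real.pi_pos
  have habs : (0:ℝ) ≤ |a| := abs_nonneg a
  have hN1 : (1:ℝ) ≤ (N:ℝ) := by exact_mod_cast hN
  set g : ℝ → ℝ := fun z => a + (b + c) * Real.sin z - Real.sin (z ^ 2) - z with hgdef
  set t : ℕ → ℝ := fun j => -(Real.pi / 2) + j * Real.pi with htdef
  clear_value g t
  have hgc : Continuous g := by
    rw [hgdef]
    apply Continuous.sub
    apply Continuous.sub
    · exact continuous_const.add (continuous_const.mul Real.continuous_sin)
    · exact Real.continuous_sin.comp (continuous_pow 2)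
    · exact continuous_id
  have hsin : ∀ j : ℕ, Real.sin (t j) = -((-1 : ℝ) ^ j) := by
    intro j
    have : t j = -(Real.pi / 2) + j * Real.pi := by rw [htdef]
    rw [this, Real.sin_add_nat_mul_pi, Real.sin_neg, Real.sin_pi_div_two]
    ring
  have hsb : ∀ x : ℝ, -1 ≤ Real.sin x ∧ Real.sin x ≤ 1 :=
    fun x => ⟨Real.neg_one_le_sin x, Real.sin_le_one x⟩
  -- g negative at even j, positive at odd j ≤ 2N
  have hneg : ∀ j : ℕ, Even j → g (t j) < 0 := by
    intro j hj
    have h1 : Real.sin (t j) = -1 := by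
      rw [hsin j, hj.neg_one_pow]
    have h2 := (hsb ((t j) ^ 2)).1
    have htj : t j ≥ -(Real.pi / 2) := by
      have : (0:ℝ) ≤ j * Real.pi := by positivity
      simp only [htdef]; linarith
    have : g (t j) = a + (b + c) * (-1) - Real.sin ((t j) ^ 2) - t j := by
      rw [hgdef]; simp only [h1]
    rw [this]
    have hNpi : Real.pi ≤ (N:ℝ) * Real.pi := le_mul_of_one_le_left hpi.le hN1
    linarith [le_abs_self a]
  have hpos : ∀ j : ℕ, j ≤ 2 * N → Odd j → 0 < g (t j) := by
    intro j hj2N hj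
    have h1 : Real.sin (t j) = 1 := by
      rw [hsin j, hj.neg_one_pow]; ring
    have h2 := (hsb ((t j) ^ 2)).2
    have hjr : (j:ℝ) ≤ 2 * N := by exact_mod_cast hj2N
    have htj : t j ≤ 2 * N * Real.pi - Real.pi / 2 := by
      simp only [htdef]
      nlinarith [mul_le_mul_of_nonneg_right hjr hpi.le]
    have : g (t j) = a + (b + c) * 1 - Real.sin ((t j) ^ 2) - t j := by
      rw [hgdef]; simp only [h1]
    rw [this]
    linarith [neg_abs_le a]
  have htmono : ∀ i j : ℕ, i ≤ j → t i ≤ t j := by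
    intro i j hij
    have : (i:ℝ) ≤ j := by exact_mod_cast hij
    simp only [htdef]
    nlinarith
  -- roots in each interval
  have hz : ∀ j : Fin (2 * N), ∃ x, x ∈ Set.Ioo (t j) (t (j + 1)) ∧ g x = 0 := by
    intro ⟨j, hj⟩
    simp only
    have hle : t j ≤ t (j + 1) := htmono j (j + 1) (Nat.le_succ j)
    rcases Nat.even_or_odd j with hje | hjo
    · have h1 : g (t j) < 0 := hneg j hje
      have h2 : 0 < g (t (j + 1)) := hpos (j + 1) (by omega) (Even.add_one hje)
      have := intermediate_value_Ioo hle hgc.continuousOn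
      have h0 : (0:ℝ) ∈ Set.Ioo (g (t j)) (g (t (j + 1))) := ⟨h1, h2⟩
      obtain ⟨x, hx, hx0⟩ := this h0
      exact ⟨x, hx, hx0⟩
    · have h1 : 0 < g (t j) := hpos j (by omega) hjo
      have h2 : g (t (j + 1)) < 0 := hneg (j + 1) (Odd.add_one hjo)
      have := intermediate_value_Ioo' hle hgc.continuousOn
      have h0 : (0:ℝ) ∈ Set.Ioo (g (t (j + 1))) (g (t j)) := ⟨h2, h1⟩
      obtain ⟨x, hx, hx0⟩ := this h0
      exact ⟨x, hx, hx0⟩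
  choose z hzmem hzero using hz
  -- z is injective
  have hzlt : ∀ i j : Fin (2 * N), i < j → z i < z j := by
    intro i j h
    calc z i < t ((i:ℕ) + 1) := (hzmem i).2
    _ ≤ t j := htmono _ _ (by omega)
    _ < z j := (hzmem j).1
  have hzinj : Function.Injective z := by
    intro i j hij
    rcases lt_trichotomy i j with h | h | h
    · exact absurd hij (ne_of_lt (hzlt i j h))
    · exact h
    · exact absurd hij.symm (ne_of_lt (hzlt j i h))
  refine ⟨Finset.image (fun j => (Real.sin (z j), Real.sin (z j), z j)) Finset.univ, ?_, ?_⟩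
  · rw [Finset.card_image_of_injective _ (fun i j h => hzinj (congrArg (fun p => p.2.2) h))]
    simp
  · intro p hp
    simp only [Finset.mem_image, Finset.mem_univ, true_and] at hp
    obtain ⟨j, rfl⟩ := hp
    have h0 := hzero j
    simp only [hgdef] at h0
    simp only [sinusoidalMap, Prod.mk.injEq, true_and]
    linarith [h0]
end

section
/- Let K = [−1, 1] × [−1, 1] × [−(1 + |a| + |b| + |c|), 1 + |a| + |b| + |c|] ⊆ ℝ³. Then F(K) ⊆ K, and for every point p ∈ ℝ³ the third iterate satisfies F³(p) ∈ K; hence K is a forward-invariant absorbing cuboid for F, and all orbits eventually lie inside a cuboid whose z-side has half-length 1 + |a| + |b| + |c|. -/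
lemma sinusoidalMap_mem (a b c : ℝ) (q : ℝ × ℝ × ℝ) (h1 : |q.1| ≤ 1) (h2 : |q.2.1| ≤ 1) :
    sinusoidalMap a b c q ∈ Set.Icc (-1 : ℝ) 1 ×ˢ Set.Icc (-1 : ℝ) 1 ×ˢ
      Set.Icc (-(1 + |a| + |b| + |c|)) (1 + |a| + |b| + |c|) := by
  refine ⟨abs_le.mp h2, ⟨Real.neg_one_le_sin _, Real.sin_le_one _⟩, abs_le.mp ?_⟩
  have hs : |Real.sin (q.2.2 ^ 2)| ≤ 1 := Real.abs_sin_le_one _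
  calc |a + b * q.1 + c * q.2.1 - Real.sin (q.2.2 ^ 2)|
      ≤ |a| + |b * q.1| + |c * q.2.1| + |Real.sin (q.2.2 ^ 2)| := by
        apply (abs_sub _ _).trans
        gcongr
        exact (abs_add_le _ _).trans (by gcongr; exact abs_add_le _ _)
    _ ≤ 1 + |a| + |b| + |c| := by
        rw [abs_mul, abs_mul]
        nlinarith [abs_nonneg b, abs_nonneg c]

/-- Let `K = [−1, 1] × [−1, 1] × [−(1 + |a| + |b| + |c|), 1 + |a| + |b| + |c|]`.
Then `F(K) ⊆ K`, and for every point `p ∈ ℝ³` the third iterate satisfies `F³(p) ∈ K`; hence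
`K` is a forward-invariant absorbing cuboid for `F`. -/
theorem absorbing_cuboid (a b c : ℝ) (K : Set (ℝ × ℝ × ℝ))
    (hK : K = Set.Icc (-1 : ℝ) 1 ×ˢ Set.Icc (-1 : ℝ) 1 ×ˢ
      Set.Icc (-(1 + |a| + |b| + |c|)) (1 + |a| + |b| + |c|)) :
    Set.MapsTo (sinusoidalMap a b c) K K ∧
    ∀ p : ℝ × ℝ × ℝ, (sinusoidalMap a b c)^[3] p ∈ K := by
  subst hK
  constructor
  · intro q hq
    exact sinusoidalMap_mem a b c q (abs_le.mpr hq.1) (abs_le.mpr hq.2.1)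
  · intro p
    have : (sinusoidalMap a b c)^[3] p =
        sinusoidalMap a b c (sinusoidalMap a b c (sinusoidalMap a b c p)) := by
      simp [Function.iterate_succ_apply']
    rw [this]
    apply sinusoidalMap_mem
    · exact Real.abs_sin_le_one _
    · exact Real.abs_sin_le_one _
end
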